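/- arXiv:1806.03333 — 3 statements merged into one kernel-verified Lean document; each statement's English description precedes it below -/
import Mathlib

section
/- The number s(n) of RNA secondary structures on n vertices (partial matchings of {1,...,n} whose arcs (i,j) satisfy j−i ≥ 2 and are pairwise non-crossing, i.e. there are no arcs (i1,j1),(i2,j2) with i1 < i2 < j1 < j2) satisfies the recursion s(n+1) = s(n) + Σ_{k=0}^{n−2} s(k)·s(n−1−k) for n ≥ 1, with s(0)=s(1)=1. -/
open Finset

/-- An RNA secondary structure on vertices `{1,…,n}` with minimum arc-length `lam`
and minimum stack-length `r`, given as a finite set of arcs `(i,j)`, `i < j`. -/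
def IsSecStr (lam r n : ℕ) (M : Finset (ℕ × ℕ)) : Prop :=
  (∀ p ∈ M, 1 ≤ p.1 ∧ p.1 < p.2 ∧ p.2 ≤ n ∧ lam ≤ p.2 - p.1) ∧
  (∀ p ∈ M, ∀ q ∈ M, p ≠ q → p.1 ≠ q.1 ∧ p.1 ≠ q.2 ∧ p.2 ≠ q.1 ∧ p.2 ≠ q.2) ∧
  (∀ p ∈ M, ∀ q ∈ M, ¬(p.1 < q.1 ∧ q.1 < p.2 ∧ p.2 < q.2)) ∧
  (∀ p ∈ M, (p.1 - 1, p.2 + 1) ∉ M → ∀ t < r, (p.1 + t, p.2 - t) ∈ M)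

/-- Irreducible: a single vertex, or an arc joining the first and last vertex. -/
def IsIrred (lam r n : ℕ) (M : Finset (ℕ × ℕ)) : Prop :=
  IsSecStr lam r n M ∧ ((n = 1 ∧ M = ∅) ∨ (1, n) ∈ M)

/-- Number of secondary structures on `n` vertices. -/
noncomputable def numStr (lam r n : ℕ) : ℕ := Set.ncard {M | IsSecStr lam r n M}

/-- Number of irreducible secondary structures on `n` vertices. -/
noncomputable def numIrr (lam r n : ℕ) : ℕ := Set.ncard {M | IsIrred lam r n M}

/-- The rainbows of `M`: arcs maximal with respect to the nesting order. -/
def rainbowSet (M : Finset (ℕ × ℕ)) : Finset (ℕ × ℕ) :=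
  M.filter (fun p => ∀ q ∈ M, q.1 ≤ p.1 → p.2 ≤ q.2 → q = p)

/-- Length of the longest rainbow (0 if there is none). -/
def longestRainbow (M : Finset (ℕ × ℕ)) : ℕ := (rainbowSet M).sup (fun p => p.2 - p.1)

/-- The number of rainbows of length `k`. -/
def numRainbows (k : ℕ) (M : Finset (ℕ × ℕ)) : ℕ :=
  ((rainbowSet M).filter (fun p => p.2 - p.1 = k)).card

/-- Probability of an event under the uniform distribution on secondary structures. -/
noncomputable def probEvent (lam r n : ℕ) (A : Finset (ℕ × ℕ) → Prop) : ℝ :=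
  (Set.ncard {M | IsSecStr lam r n M ∧ A M} : ℝ) / (Set.ncard {M | IsSecStr lam r n M} : ℝ)

/-! ### auxiliary development -/

lemma secStr_iff {n : ℕ} {M : Finset (ℕ × ℕ)} : IsSecStr 2 1 n M ↔
    (∀ p ∈ M, 1 ≤ p.1 ∧ p.1 < p.2 ∧ p.2 ≤ n ∧ 2 ≤ p.2 - p.1) ∧
    (∀ p ∈ M, ∀ q ∈ M, p ≠ q → p.1 ≠ q.1 ∧ p.1 ≠ q.2 ∧ p.2 ≠ q.1 ∧ p.2 ≠ q.2) ∧
    (∀ p ∈ M, ∀ q ∈ M, ¬(p.1 < q.1 ∧ q.1 < p.2 ∧ p.2 < q.2)) := by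
  unfold IsSecStr
  constructor
  · rintro ⟨a, b, c, -⟩; exact ⟨a, b, c⟩
  · rintro ⟨a, b, c⟩
    refine ⟨a, b, c, ?_⟩
    intro p hp _ t ht
    interval_cases t
    simpa using hp

open Classical in
noncomputable def strFinset (n : ℕ) : Finset (Finset (ℕ × ℕ)) :=
  ((Finset.range (n+1) ×ˢ Finset.range (n+1)).powerset).filter (fun M => IsSecStr 2 1 n M)

lemma mem_strFinset {n : ℕ} {M : Finset (ℕ × ℕ)} :
    M ∈ strFinset n ↔ IsSecStr 2 1 n M := by
  classical
  simp only [strFinset, mem_filter, mem_powerset]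
  constructor
  · exact fun h => h.2
  · intro h
    refine ⟨fun p hp => ?_, h⟩
    have := h.1 p hp
    simp only [Finset.mem_product, Finset.mem_range]
    omega

lemma numStr_eq (n : ℕ) : numStr 2 1 n = (strFinset n).card := by
  have : {M | IsSecStr 2 1 n M} = ↑(strFinset n) := by
    ext M; simp [mem_strFinset]
  rw [numStr, this, Set.ncard_coe_finset]

lemma strFinset_small {n : ℕ} (h : n ≤ 1) : strFinset n = {∅} := by
  ext M
  simp only [mem_strFinset, secStr_iff, Finset.mem_singleton]
  constructor
  · rintro ⟨a, -, -⟩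
    rw [Finset.eq_empty_iff_forall_notMem]
    intro p hp
    have := a p hp
    omega
  · rintro rfl
    refine ⟨?_, ?_, ?_⟩ <;> simp

/-- decomposition of an arc of a structure containing `(k+1, n+1)` -/
lemma arc_decomp {n k : ℕ} {M : Finset (ℕ × ℕ)} (hM : IsSecStr 2 1 (n+1) M)
    (hkM : (k+1, n+1) ∈ M) {p : ℕ × ℕ} (hp : p ∈ M) :
    p = (k+1, n+1) ∨ p.2 ≤ k ∨ (k+2 ≤ p.1 ∧ p.2 ≤ n) := by
  rw [secStr_iff] at hM
  obtain ⟨hb, hd, hc⟩ := hM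
  by_cases hpe : p = (k+1, n+1)
  · exact Or.inl hpe
  have h1 := hb p hp
  have h2 := hd p hp _ hkM hpe
  have h3 := hc p hp _ hkM
  have h4 := hc _ hkM p hp
  simp only at h2 h3 h4 ⊢
  omega

section main
variable (n k : ℕ)

/-- shift up -/
def shU (p : ℕ × ℕ) : ℕ × ℕ := (p.1 + (k+1), p.2 + (k+1))
/-- shift down -/
def shD (p : ℕ × ℕ) : ℕ × ℕ := (p.1 - (k+1), p.2 - (k+1))

noncomputable def Tk : Finset (Finset (ℕ × ℕ)) :=
  (strFinset (n+1)).filter (fun M => (k+1, n+1) ∈ M)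

noncomputable def fSplit (M : Finset (ℕ × ℕ)) : Finset (ℕ × ℕ) × Finset (ℕ × ℕ) :=
  (M.filter (fun p => p.2 ≤ k), (M.filter (fun p => k+1 < p.1)).image (shD k))

noncomputable def gGlue (AB : Finset (ℕ × ℕ) × Finset (ℕ × ℕ)) : Finset (ℕ × ℕ) :=
  AB.1 ∪ AB.2.image (shU k) ∪ {(k+1, n+1)}

lemma Tk_card (hn : 1 ≤ n) (hk : k < n - 1) :
    (Tk n k).card = (strFinset k).card * (strFinset (n-1-k)).card := by
  classical
  rw [← Finset.card_product]
  apply Finset.card_bij' (fun M _ => fSplit k M) (fun AB _ => gGlue n k AB)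
  · -- hf : fSplit ∈ product
    intro M hM
    simp only [Tk, mem_filter] at hM
    obtain ⟨hM1, hkM⟩ := hM
    rw [mem_strFinset] at hM1
    have hdec := fun {p} hp => arc_decomp hM1 hkM (p := p) hp
    rw [secStr_iff] at hM1
    obtain ⟨hb, hd, hc⟩ := hM1
    simp only [fSplit, Finset.mem_product, mem_strFinset, secStr_iff]
    constructor
    · refine ⟨?_, ?_, ?_⟩
      · intro p hp
        simp only [mem_filter] at hp
        have := hb p hp.1
        omega
      · intro p hp q hq hpq
        simp only [mem_filter] at hp hq
        exact hd p hp.1 q hq.1 hpq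
      · intro p hp q hq
        simp only [mem_filter] at hp hq
        exact hc p hp.1 q hq.1
    · refine ⟨?_, ?_, ?_⟩
      · intro p hp
        simp only [mem_image, mem_filter] at hp
        obtain ⟨q, ⟨hq, hq1⟩, rfl⟩ := hp
        have := hb q hq
        have h2 : q = (k+1, n+1) ∨ q.2 ≤ k ∨ (k+2 ≤ q.1 ∧ q.2 ≤ n) := hdec hq
        have h3 : q ≠ (k+1, n+1) := by
          intro h; rw [h] at hq1; simp at hq1
        simp only [shD]
        rcases h2 with h2 | h2 | h2
        · exact absurd h2 h3
        · omega
        · omega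
      · intro p hp q hq hpq
        simp only [mem_image, mem_filter] at hp hq
        obtain ⟨a, ⟨ha, ha1⟩, rfl⟩ := hp
        obtain ⟨b, ⟨hb', hb1⟩, rfl⟩ := hq
        have hab : a ≠ b := by rintro rfl; exact hpq rfl
        have h1 := hd a ha b hb' hab
        have h2 := hb a ha
        have h3 := hb b hb'
        simp only [shD]
        refine ⟨?_, ?_, ?_, ?_⟩ <;> omega
      · intro p hp q hq
        simp only [mem_image, mem_filter] at hp hq
        obtain ⟨a, ⟨ha, ha1⟩, rfl⟩ := hp
        obtain ⟨b, ⟨hb', hb1⟩, rfl⟩ := hq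
        have h1 := hc a ha b hb'
        have h2 := hb a ha
        have h3 := hb b hb'
        simp only [shD]
        omega
  · -- hg : gGlue ∈ Tk
    intro AB hAB
    simp only [Finset.mem_product, mem_strFinset, secStr_iff] at hAB
    obtain ⟨⟨ab, ad, ac⟩, ⟨bb, bd, bc⟩⟩ := hAB
    have hmem : ∀ p ∈ gGlue n k AB,
        (p ∈ AB.1 ∧ 1 ≤ p.1 ∧ p.1 < p.2 ∧ p.2 ≤ k ∧ 2 ≤ p.2 - p.1) ∨
        (∃ b ∈ AB.2, p = shU k b ∧ k+2 ≤ p.1 ∧ p.1 < p.2 ∧ p.2 ≤ n ∧ 2 ≤ p.2 - p.1) ∨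
        p = (k+1, n+1) := by
      intro p hp
      simp only [gGlue, Finset.mem_union, Finset.mem_singleton, mem_image] at hp
      rcases hp with (hp | ⟨b, hb', rfl⟩) | hp
      · have := ab p hp; exact Or.inl ⟨hp, by omega⟩
      · have := bb b hb'
        refine Or.inr (Or.inl ⟨b, hb', rfl, ?_⟩)
        simp only [shU]
        omega
      · exact Or.inr (Or.inr hp)
    simp only [Tk, mem_filter, mem_strFinset, secStr_iff]
    refine ⟨⟨?_, ?_, ?_⟩, ?_⟩
    · intro p hp
      rcases hmem p hp with h | ⟨b, -, -, h⟩ | rfl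
      · omega
      · omega
      · dsimp only; omega
    · intro p hp q hq hpq
      rcases hmem p hp with hP | ⟨a, haB, rfl, hP⟩ | rfl <;>
        rcases hmem q hq with hQ | ⟨b, hbB, rfl, hQ⟩ | rfl
      · exact ad p hP.1 q hQ.1 hpq
      · simp only [shU] at hQ ⊢; omega
      · dsimp only; omega
      · simp only [shU] at hP ⊢; omega
      · have hab : a ≠ b := by rintro rfl; exact hpq rfl
        have := bd a haB b hbB hab
        simp only [shU] at hP hQ ⊢; omega
      · simp only [shU] at hP ⊢; omega
      · dsimp only; omega
      · simp only [shU] at hQ ⊢; omega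
      · exact absurd rfl hpq
    · intro p hp q hq
      rcases hmem p hp with hP | ⟨a, haB, rfl, hP⟩ | rfl <;>
        rcases hmem q hq with hQ | ⟨b, hbB, rfl, hQ⟩ | rfl
      · exact ac p hP.1 q hQ.1
      · simp only [shU] at hQ ⊢; omega
      · dsimp only; omega
      · simp only [shU] at hP ⊢; omega
      · have := bc a haB b hbB
        simp only [shU] at hP hQ ⊢; omega
      · simp only [shU] at hP ⊢; omega
      · dsimp only; omega
      · simp only [shU] at hQ ⊢; omega
      · dsimp only; omega
    · simp [gGlue]
  · -- left inverse : gGlue (fSplit M) = M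
    intro M hM
    simp only [Tk, mem_filter] at hM
    obtain ⟨hM1, hkM⟩ := hM
    rw [mem_strFinset] at hM1
    have hdec := fun {p} hp => arc_decomp hM1 hkM (p := p) hp
    have hb := (secStr_iff.mp hM1).1
    ext p
    simp only [gGlue, fSplit, Finset.mem_union, Finset.mem_singleton, mem_filter,
      Finset.mem_image]
    constructor
    · rintro ((⟨hp, -⟩ | ⟨_, ⟨q, ⟨hq, hq1⟩, rfl⟩, rfl⟩) | rfl)
      · exact hp
      · have := hb q hq
        have : shU k (shD k q) = q := by
          simp only [shU, shD, Prod.ext_iff]; constructor <;> omega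
        rw [this]; exact hq
      · exact hkM
    · intro hp
      rcases hdec hp with rfl | h | h
      · exact Or.inr rfl
      · exact Or.inl (Or.inl ⟨hp, h⟩)
      · refine Or.inl (Or.inr ⟨shD k p, ⟨p, ⟨hp, by omega⟩, rfl⟩, ?_⟩)
        simp only [shU, shD, Prod.ext_iff]
        have := hb p hp
        constructor <;> omega
  · -- right inverse : fSplit (gGlue AB) = AB
    intro AB hAB
    simp only [Finset.mem_product, mem_strFinset, secStr_iff] at hAB
    obtain ⟨⟨ab, -, -⟩, ⟨bb, -, -⟩⟩ := hAB
    have h1 : (gGlue n k AB).filter (fun p => p.2 ≤ k) = AB.1 := by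
      ext p
      simp only [mem_filter, gGlue, Finset.mem_union, Finset.mem_singleton, mem_image]
      constructor
      · rintro ⟨(hp | ⟨b, hb', rfl⟩) | rfl, h2⟩
        · exact hp
        · have := bb b hb'; simp only [shU] at h2; omega
        · dsimp only at h2; omega
      · intro hp
        exact ⟨Or.inl (Or.inl hp), (ab p hp).2.2.1⟩
    have h2 : ((gGlue n k AB).filter (fun p => k+1 < p.1)).image (shD k) = AB.2 := by
      have h3 : (gGlue n k AB).filter (fun p => k+1 < p.1) = AB.2.image (shU k) := by
        ext p
        simp only [mem_filter, gGlue, Finset.mem_union, Finset.mem_singleton, mem_image]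
        constructor
        · rintro ⟨(hp | ⟨b, hb', rfl⟩) | rfl, h2⟩
          · have := ab p hp; omega
          · exact ⟨b, hb', rfl⟩
          · dsimp only at h2; omega
        · rintro ⟨b, hb', rfl⟩
          refine ⟨Or.inl (Or.inr ⟨b, hb', rfl⟩), ?_⟩
          have := bb b hb'
          simp only [shU]
          omega
      rw [h3, Finset.image_image]
      have : AB.2.image (shD k ∘ shU k) = AB.2.image id := by
        apply Finset.image_congr
        intro b _
        simp only [Function.comp_apply, shU, shD, id_eq, Prod.ext_iff]
        constructor <;> omega
      rw [this, Finset.image_id]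
    simp only [fSplit, h1, h2]

lemma strFinset_succ_card (hn : 1 ≤ n) :
    (strFinset (n+1)).card =
      (strFinset n).card + ∑ k ∈ Finset.range (n-1), (Tk n k).card := by
  classical
  have hU : strFinset (n+1) = strFinset n ∪ (Finset.range (n-1)).biUnion (fun k => Tk n k) := by
    ext M
    simp only [Finset.mem_union, Finset.mem_biUnion, Finset.mem_range, Tk, mem_filter]
    constructor
    · intro hM
      by_cases hne : ∀ p ∈ M, p.2 ≠ n+1
      · left
        rw [mem_strFinset, secStr_iff] at hM ⊢
        obtain ⟨hb, hd, hc⟩ := hM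
        refine ⟨fun p hp => ?_, hd, hc⟩
        have := hb p hp
        have := hne p hp
        omega
      · right
        push_neg at hne
        obtain ⟨p, hp, hp2⟩ := hne
        have hb := (secStr_iff.mp (mem_strFinset.mp hM)).1 p hp
        refine ⟨p.1 - 1, by omega, hM, ?_⟩
        have : (p.1 - 1 + 1, n+1) = p := by
          rw [Prod.ext_iff]; constructor <;> dsimp only <;> omega
        rw [this]; exact hp
    · rintro (hM | ⟨k, hk, hM, -⟩)
      · rw [mem_strFinset, secStr_iff] at hM ⊢
        obtain ⟨hb, hd, hc⟩ := hM
        refine ⟨fun p hp => ?_, hd, hc⟩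
        have := hb p hp
        omega
      · exact hM
  have hdisj : Disjoint (strFinset n) ((Finset.range (n-1)).biUnion (fun k => Tk n k)) := by
    rw [Finset.disjoint_left]
    intro M hMn hMb
    simp only [Finset.mem_biUnion, Finset.mem_range, Tk, mem_filter] at hMb
    obtain ⟨k, hk, -, hkM⟩ := hMb
    have := (secStr_iff.mp (mem_strFinset.mp hMn)).1 (k+1, n+1) hkM
    dsimp only at this
    omega
  have h3 : ((Finset.range (n-1)).biUnion (fun k => Tk n k)).card =
      ∑ k ∈ Finset.range (n-1), (Tk n k).card := by
    apply Finset.card_biUnion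
    intro a _ b _ hab
    rw [Function.onFun, Finset.disjoint_left]
    intro M hMa hMb
    simp only [Tk, mem_filter] at hMa hMb
    have hd := (secStr_iff.mp (mem_strFinset.mp hMa.1)).2.1
    have := hd (a+1, n+1) hMa.2 (b+1, n+1) hMb.2 (by simp; omega)
    exact this.2.2.2 rfl
  rw [hU, Finset.card_union_of_disjoint hdisj, h3]

end main

theorem secondary_structure_recursion :
    numStr 2 1 0 = 1 ∧ numStr 2 1 1 = 1 ∧
    ∀ n : ℕ, 1 ≤ n →
      numStr 2 1 (n + 1) =
        numStr 2 1 n + ∑ k ∈ Finset.range (n - 1), numStr 2 1 k * numStr 2 1 (n - 1 - k) := by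
  refine ⟨?_, ?_, ?_⟩
  · rw [numStr_eq, strFinset_small (by norm_num)]; simp
  · rw [numStr_eq, strFinset_small (by norm_num)]; simp
  · intro n hn
    rw [numStr_eq, numStr_eq, strFinset_succ_card n hn]
    congr 1
    apply Finset.sum_congr rfl
    intro k hk
    rw [Finset.mem_range] at hk
    rw [Tk_card n k hn hk, numStr_eq, numStr_eq]
end

section
/- Let S(x) = Σ_{n≥0} s(n)x^n be the generating function for RNA secondary structures with minimum arc-length λ = 2 and minimum stack-length r = 1. Then, as a formal power series identity, x²·S(x)² − ((1−x)(1−x²+x²) + x²)·S(x) + (1−x²+x²) = 0; equivalently x²S(x)² − (1−x+x²)S(x) + 1 = 0. -/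
open Finset

def Ok (n : ℕ) (M : Finset (ℕ × ℕ)) : Prop :=
  (∀ p ∈ M, 1 ≤ p.1 ∧ p.1 + 2 ≤ p.2 ∧ p.2 ≤ n) ∧
  (∀ p ∈ M, ∀ q ∈ M, p ≠ q → p.1 ≠ q.1 ∧ p.1 ≠ q.2 ∧ p.2 ≠ q.1 ∧ p.2 ≠ q.2) ∧
  (∀ p ∈ M, ∀ q ∈ M, ¬(p.1 < q.1 ∧ q.1 < p.2 ∧ p.2 < q.2))

lemma isSecStr_iff_ok {n : ℕ} {M : Finset (ℕ × ℕ)} : IsSecStr 2 1 n M ↔ Ok n M := by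
  constructor
  · rintro ⟨h1, h2, h3, _⟩
    exact ⟨fun p hp => by have := h1 p hp; omega, h2, h3⟩
  · rintro ⟨h1, h2, h3⟩
    refine ⟨fun p hp => by have := h1 p hp; omega, h2, h3, ?_⟩
    intro p hp _ t ht
    interval_cases t
    simpa using hp

open scoped Classical in
noncomputable def str (n : ℕ) : Finset (Finset (ℕ × ℕ)) :=
  ((Finset.range (n+1) ×ˢ Finset.range (n+1)).powerset).filter (fun M => Ok n M)

lemma mem_str {n : ℕ} {M : Finset (ℕ × ℕ)} : M ∈ str n ↔ Ok n M := by
  classical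
  simp only [str, mem_filter, mem_powerset, and_iff_right_iff_imp]
  intro hOk
  intro p hp
  have := hOk.1 p hp
  simp only [mem_product, mem_range]
  omega

lemma numStr_eq_card (n : ℕ) : numStr 2 1 n = (str n).card := by
  have : {M | IsSecStr 2 1 n M} = ↑(str n) := by
    ext M
    simp [isSecStr_iff_ok, mem_str]
  rw [numStr, this, Set.ncard_coe_finset]

lemma str_zero_one {n : ℕ} (hn : n ≤ 1) : str n = {∅} := by
  ext M
  simp only [mem_str, mem_singleton]
  constructor
  · intro h
    by_contra hne
    obtain ⟨p, hp⟩ := Finset.nonempty_iff_ne_empty.2 hne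
    have := h.1 p hp
    omega
  · rintro rfl
    exact ⟨by simp, by simp, by simp⟩
lemma ok_mono {m n : ℕ} {M : Finset (ℕ × ℕ)} (h : Ok m M) (hmn : m ≤ n) : Ok n M :=
  ⟨fun p hp => by have := h.1 p hp; omega, h.2.1, h.2.2⟩

lemma ok_subset {n : ℕ} {M M' : Finset (ℕ × ℕ)} (h : Ok n M) (hs : M' ⊆ M) : Ok n M' :=
  ⟨fun p hp => h.1 p (hs hp), fun p hp q hq => h.2.1 p (hs hp) q (hs hq),
    fun p hp q hq => h.2.2 p (hs hp) q (hs hq)⟩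

lemma ok_shift_up {m c : ℕ} {M : Finset (ℕ × ℕ)} (h : Ok m M) :
    Ok (m + c) (M.image (fun p => (p.1 + c, p.2 + c))) := by
  obtain ⟨h1, h2, h3⟩ := h
  refine ⟨?_, ?_, ?_⟩
  · intro p hp
    obtain ⟨q, hq, rfl⟩ := mem_image.1 hp
    have := h1 q hq
    simp only []
    omega
  · intro p hp q hq hne
    obtain ⟨a, ha, rfl⟩ := mem_image.1 hp
    obtain ⟨b, hb, rfl⟩ := mem_image.1 hq
    have hab : a ≠ b := by
      rintro rfl; exact hne rfl
    have := h2 a ha b hb hab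
    simp only []
    omega
  · intro p hp q hq
    obtain ⟨a, ha, rfl⟩ := mem_image.1 hp
    obtain ⟨b, hb, rfl⟩ := mem_image.1 hq
    have := h3 a ha b hb
    simp only []
    omega

lemma ok_shift_down {m c : ℕ} {M : Finset (ℕ × ℕ)} (h : Ok m M)
    (hc : ∀ p ∈ M, c < p.1) :
    Ok (m - c) (M.image (fun p => (p.1 - c, p.2 - c))) := by
  obtain ⟨h1, h2, h3⟩ := h
  refine ⟨?_, ?_, ?_⟩
  · intro p hp
    obtain ⟨q, hq, rfl⟩ := mem_image.1 hp
    have := h1 q hq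
    have := hc q hq
    simp only []
    omega
  · intro p hp q hq hne
    obtain ⟨a, ha, rfl⟩ := mem_image.1 hp
    obtain ⟨b, hb, rfl⟩ := mem_image.1 hq
    have hab : a ≠ b := by rintro rfl; exact hne rfl
    have := h2 a ha b hb hab
    have := h1 a ha; have := h1 b hb
    have := hc a ha; have := hc b hb
    simp only []
    omega
  · intro p hp q hq
    obtain ⟨a, ha, rfl⟩ := mem_image.1 hp
    obtain ⟨b, hb, rfl⟩ := mem_image.1 hq
    have := h3 a ha b hb
    have := h1 a ha; have := h1 b hb
    have := hc a ha; have := hc b hb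
    simp only []
    omega

lemma ok_of_bound {n m : ℕ} {M : Finset (ℕ × ℕ)} (h : Ok n M) (hb : ∀ p ∈ M, p.2 ≤ m) :
    Ok m M :=
  ⟨fun p hp => ⟨(h.1 p hp).1, (h.1 p hp).2.1, hb p hp⟩, h.2.1, h.2.2⟩

lemma arc_cases {n i : ℕ} {M : Finset (ℕ × ℕ)} (h : Ok n M) (hr : (i+1, n) ∈ M)
    {p : ℕ × ℕ} (hp : p ∈ M) :
    p = (i+1, n) ∨ p.2 < i+1 ∨ (i+1 < p.1 ∧ p.2 < n) := by
  by_cases hpe : p = (i+1, n)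
  · exact Or.inl hpe
  · have h2 := h.2.1 p hp (i+1, n) hr hpe
    have h3 := h.2.2 p hp (i+1, n) hr
    have h1 := h.1 p hp
    simp only [] at h2 h3
    right
    omega

open scoped Classical in
lemma card_B {n i : ℕ} (hi : i + 3 ≤ n) :
    ((str n).filter (fun M => (i+1, n) ∈ M)).card
      = (str i).card * (str (n - 2 - i)).card := by
  classical
  rw [← card_product]
  apply Finset.card_nbij'
    (i := fun M => (M.filter (fun p => p.2 < i+1),
      (M.filter (fun p => i+1 < p.1)).image (fun p => (p.1 - (i+1), p.2 - (i+1)))))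
    (j := fun P => insert (i+1, n) (P.1 ∪ P.2.image (fun p => (p.1 + (i+1), p.2 + (i+1)))))
  · -- forward maps into product
    intro M hM
    rw [mem_coe, mem_filter] at hM
    obtain ⟨hMs, hr⟩ := hM
    rw [mem_str] at hMs
    rw [mem_coe, mem_product, mem_str, mem_str]
    constructor
    · exact ok_of_bound (ok_subset hMs (filter_subset _ _))
        (fun p hp => by have := (mem_filter.1 hp).2; omega)
    · have hR : Ok (n-1) (M.filter (fun p => i+1 < p.1)) := by
        apply ok_of_bound (ok_subset hMs (filter_subset _ _))
        intro p hp
        rw [mem_filter] at hp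
        rcases arc_cases hMs hr hp.1 with h | h | h
        · exfalso; rw [h] at hp; simp at hp
        · have := hMs.1 p hp.1; omega
        · omega
      have := ok_shift_down (c := i+1) hR (fun p hp => (mem_filter.1 hp).2)
      have he : n - 1 - (i+1) = n - 2 - i := by omega
      rwa [he] at this
  · -- backward maps into filter
    rintro ⟨M1, M2⟩ hP
    rw [mem_coe, mem_product, mem_str, mem_str] at hP
    obtain ⟨hM1, hM2⟩ := hP
    rw [mem_coe, mem_filter, mem_str]
    refine ⟨?_, by simp⟩
    have hM2' : Ok (n-1) (M2.image (fun p => (p.1 + (i+1), p.2 + (i+1)))) := by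
      have := ok_shift_up (c := i+1) hM2
      have he : n - 2 - i + (i+1) = n - 1 := by omega
      rwa [he] at this
    have hA : ∀ p ∈ M1, 1 ≤ p.1 ∧ p.1 + 2 ≤ p.2 ∧ p.2 ≤ i := hM1.1
    have hB : ∀ p ∈ M2.image (fun p => (p.1 + (i+1), p.2 + (i+1))),
        i + 2 ≤ p.1 ∧ p.1 + 2 ≤ p.2 ∧ p.2 ≤ n - 1 := by
      intro p hp
      obtain ⟨q, hq, rfl⟩ := mem_image.1 hp
      have h1 := hM2.1 q hq
      have h2 := hM2'.1 _ hp
      simp only [] at h2 ⊢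
      omega
    set M2' := M2.image (fun p => (p.1 + (i+1), p.2 + (i+1))) with hM2'def
    refine ⟨?_, ?_, ?_⟩
    · intro p hp
      rcases mem_insert.1 hp with rfl | hp'
      · simp; omega
      · rcases mem_union.1 hp' with h | h
        · have := hA p h; omega
        · have := hB p h; omega
    · intro p hp q hq hne
      rcases mem_insert.1 hp with rfl | hp' <;>
        [skip; rcases mem_union.1 hp' with hp1 | hp2] <;>
      (rcases mem_insert.1 hq with rfl | hq' <;>
        [skip; rcases mem_union.1 hq' with hq1 | hq2])
      · exact absurd rfl hne
      · have := hA q hq1; simp only [] at *; omega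
      · have := hB q hq2; simp only [] at *; omega
      · have := hA p hp1; simp only [] at *; omega
      · exact hM1.2.1 p hp1 q hq1 hne
      · have := hA p hp1; have := hB q hq2; omega
      · have := hB p hp2; simp only [] at *; omega
      · have := hB p hp2; have := hA q hq1; omega
      · exact hM2'.2.1 p hp2 q hq2 hne
    · intro p hp q hq
      rcases mem_insert.1 hp with rfl | hp' <;>
        [skip; rcases mem_union.1 hp' with hp1 | hp2] <;>
      (rcases mem_insert.1 hq with rfl | hq' <;>
        [skip; rcases mem_union.1 hq' with hq1 | hq2])
      · simp only []; omega
      · have := hA q hq1; simp only [] at *; omega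
      · have := hB q hq2; simp only [] at *; omega
      · have := hA p hp1; simp only [] at *; omega
      · exact hM1.2.2 p hp1 q hq1
      · have := hA p hp1; have := hB q hq2; omega
      · have := hB p hp2; simp only [] at *; omega
      · have := hB p hp2; have := hA q hq1; omega
      · exact hM2'.2.2 p hp2 q hq2
  · -- left inverse
    intro M hM
    rw [mem_coe, mem_filter, mem_str] at hM
    obtain ⟨hMs, hr⟩ := hM
    have hRR : ((M.filter (fun p => i+1 < p.1)).image
          (fun p => (p.1 - (i+1), p.2 - (i+1)))).image
          (fun p => (p.1 + (i+1), p.2 + (i+1)))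
        = M.filter (fun p => i+1 < p.1) := by
      rw [Finset.image_image]
      have hcongr : Finset.image ((fun p : ℕ × ℕ => (p.1 + (i+1), p.2 + (i+1))) ∘
            fun p : ℕ × ℕ => (p.1 - (i+1), p.2 - (i+1))) (M.filter (fun p => i+1 < p.1))
          = Finset.image id (M.filter (fun p => i+1 < p.1)) := by
        apply Finset.image_congr
        intro x hx
        rw [mem_coe, mem_filter] at hx
        have := hMs.1 x hx.1
        have h2 := hx.2
        simp only [Function.comp_apply, id_eq]
        ext <;> simp <;> omega
      rw [hcongr, Finset.image_id]
    simp only []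
    rw [hRR]
    ext x
    simp only [mem_insert, mem_union, mem_filter]
    constructor
    · rintro (rfl | ⟨hx, _⟩ | ⟨hx, _⟩) <;> first | exact hr | exact hx
    · intro hx
      rcases arc_cases hMs hr hx with h | h | h
      · exact Or.inl h
      · exact Or.inr (Or.inl ⟨hx, h⟩)
      · exact Or.inr (Or.inr ⟨hx, h.1⟩)
  · -- right inverse
    rintro ⟨M1, M2⟩ hP
    rw [mem_coe, mem_product, mem_str, mem_str] at hP
    obtain ⟨hM1, hM2⟩ := hP
    simp only []
    have h1 : (insert (i+1, n) (M1 ∪ M2.image (fun p => (p.1 + (i+1), p.2 + (i+1))))).filter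
        (fun p => p.2 < i+1) = M1 := by
      ext x
      simp only [mem_filter, mem_insert, mem_union, mem_image]
      constructor
      · rintro ⟨rfl | hx | ⟨q, hq, rfl⟩, hlt⟩
        · simp at hlt; omega
        · exact hx
        · simp at hlt; omega
      · intro hx
        have := hM1.1 x hx
        exact ⟨Or.inr (Or.inl hx), by omega⟩
    have h2 : (insert (i+1, n) (M1 ∪ M2.image (fun p => (p.1 + (i+1), p.2 + (i+1))))).filter
        (fun p => i+1 < p.1) = M2.image (fun p => (p.1 + (i+1), p.2 + (i+1))) := by
      ext x
      simp only [mem_filter, mem_insert, mem_union, mem_image]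
      constructor
      · rintro ⟨rfl | hx | hx, hlt⟩
        · simp at hlt
        · have := hM1.1 x hx; omega
        · exact hx
      · rintro ⟨q, hq, rfl⟩
        have := hM2.1 q hq
        exact ⟨Or.inr (Or.inr ⟨q, hq, rfl⟩), by simp; omega⟩
    rw [h1, h2, Finset.image_image]
    refine Prod.ext rfl ?_
    simp only []
    have hcongr : Finset.image ((fun p : ℕ × ℕ => (p.1 - (i+1), p.2 - (i+1))) ∘
          fun p : ℕ × ℕ => (p.1 + (i+1), p.2 + (i+1))) M2
        = Finset.image id M2 := by
      apply Finset.image_congr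
      intro x hx
      simp only [Function.comp_apply, id_eq]
      ext <;> simp
    rw [hcongr, Finset.image_id]

open scoped Classical in
lemma str_rec {n : ℕ} (hn : 2 ≤ n) :
    (str n).card = (str (n-1)).card
      + ∑ i ∈ Finset.range (n-2), (str i).card * (str (n-2-i)).card := by
  classical
  set A := (str n).filter (fun M => ∀ p ∈ M, p.2 ≠ n) with hA
  set B := (Finset.range (n-2)).biUnion
    (fun i => (str n).filter (fun M => (i+1, n) ∈ M)) with hB
  have hsplit : str n = A ∪ B := by
    ext M
    constructor
    · intro hM
      by_cases h : ∀ p ∈ M, p.2 ≠ n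
      · exact mem_union.2 (Or.inl (mem_filter.2 ⟨hM, h⟩))
      · push_neg at h
        obtain ⟨p, hp, hpn⟩ := h
        have hOk := mem_str.1 hM
        have h1 := hOk.1 p hp
        refine mem_union.2 (Or.inr (mem_biUnion.2 ⟨p.1 - 1, ?_, ?_⟩))
        · rw [mem_range]; omega
        · rw [mem_filter]
          refine ⟨hM, ?_⟩
          have : (p.1 - 1 + 1, n) = p := by
            ext <;> simp <;> omega
          rw [this]; exact hp
    · intro hM
      rcases mem_union.1 hM with h | h
      · exact (mem_filter.1 h).1
      · obtain ⟨i, _, hM'⟩ := mem_biUnion.1 h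
        exact (mem_filter.1 hM').1
  have hdisj : Disjoint A B := by
    rw [Finset.disjoint_left]
    intro M hMA hMB
    obtain ⟨_, hno⟩ := mem_filter.1 hMA
    obtain ⟨i, _, hM'⟩ := mem_biUnion.1 hMB
    exact hno _ (mem_filter.1 hM').2 rfl
  have hAcard : A.card = (str (n-1)).card := by
    congr 1
    ext M
    rw [hA, mem_filter, mem_str, mem_str]
    constructor
    · rintro ⟨hOk, hno⟩
      exact ok_of_bound hOk (fun p hp => by
        have := hOk.1 p hp; have := hno p hp; omega)
    · intro hOk
      refine ⟨ok_mono hOk (by omega), fun p hp => by have := hOk.1 p hp; omega⟩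
  have hBcard : B.card = ∑ i ∈ Finset.range (n-2), (str i).card * (str (n-2-i)).card := by
    rw [hB, Finset.card_biUnion]
    · apply Finset.sum_congr rfl
      intro i hi
      rw [mem_range] at hi
      exact card_B (by omega)
    · intro i hi j hj hij
      rw [Function.onFun, Finset.disjoint_left]
      intro M hMi hMj
      obtain ⟨hMs, hri⟩ := mem_filter.1 hMi
      obtain ⟨_, hrj⟩ := mem_filter.1 hMj
      have hOk := mem_str.1 hMs
      have hne : ((i:ℕ)+1, n) ≠ (j+1, n) := by
        intro h; apply hij; simpa using h
      have := hOk.2.1 _ hri _ hrj hne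
      simp at this
  rw [hsplit, Finset.card_union_of_disjoint hdisj, hAcard, hBcard]

lemma numStr_zero : numStr 2 1 0 = 1 := by
  rw [numStr_eq_card, str_zero_one (by norm_num)]; simp

lemma numStr_one : numStr 2 1 1 = 1 := by
  rw [numStr_eq_card, str_zero_one (by norm_num)]; simp

lemma numStr_rec (m : ℕ) :
    numStr 2 1 (m+2) + numStr 2 1 m
      = numStr 2 1 (m+1) + ∑ p ∈ Finset.HasAntidiagonal.antidiagonal m, numStr 2 1 p.1 * numStr 2 1 p.2 := by
  have h := str_rec (n := m+2) (by omega)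
  simp only [show m+2-1 = m+1 from rfl, show m+2-2 = m from rfl] at h
  simp only [numStr_eq_card]
  rw [Finset.Nat.sum_antidiagonal_eq_sum_range_succ_mk, Finset.sum_range_succ]
  have h0 : (str (m - m)).card = 1 := by
    simp [Nat.sub_self, str_zero_one (le_refl 0 |>.trans zero_le_one)]
  rw [Nat.sub_self] at h0 ⊢
  rw [h, h0]
  ring


open PowerSeries in
/-- Functional equation for the generating function of secondary structures
with minimum arc-length 2 and minimum stack-length 1:
`x²S(x)² − (1−x+x²)S(x) + 1 = 0`. -/
theorem secondary_structure_functional_equation :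
    (PowerSeries.X : PowerSeries ℚ) ^ 2 * (PowerSeries.mk fun n => (numStr 2 1 n : ℚ)) ^ 2
      - (1 - PowerSeries.X + PowerSeries.X ^ 2) * (PowerSeries.mk fun n => (numStr 2 1 n : ℚ))
      + 1 = 0 := by
  set S : PowerSeries ℚ := PowerSeries.mk fun n => (numStr 2 1 n : ℚ) with hS
  ext n
  have h1 : (X:ℚ⟦X⟧)^2 * S^2 - (1 - X + X^2)*S + 1
      = X^2*(S*S) - (S - X^1*S + X^2*S) + 1 := by ring
  rw [h1, map_zero]
  simp only [map_add, map_sub]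
  rw [coeff_X_pow_mul', coeff_X_pow_mul', coeff_X_pow_mul', PowerSeries.coeff_one]
  match n with
  | 0 => simp [hS, numStr_zero]
  | 1 => simp [hS, numStr_zero, numStr_one]
  | (m+2) =>
    rw [if_pos (by omega), if_pos (by omega), if_pos (by omega), if_neg (by omega)]
    simp only [show m+2-2 = m from rfl, show m+2-1 = m+1 from rfl]
    rw [PowerSeries.coeff_mul]
    simp only [hS, PowerSeries.coeff_mk]
    have key := numStr_rec m
    have : ((numStr 2 1 (m+2) : ℚ) + numStr 2 1 m)
        = (numStr 2 1 (m+1) : ℚ)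
          + ∑ p ∈ Finset.HasAntidiagonal.antidiagonal m, (numStr 2 1 p.1 : ℚ) * numStr 2 1 p.2 := by
      exact_mod_cast congrArg (fun k : ℕ => (k : ℚ)) key
    linarith [this]
end

section
/- Let Φ(x) = 1/(1−x) and let F(x) be a formal power series with F(0)=0 and nonnegative coefficients, and define S_{≤m}(x) = Φ(F_{≤m}(x)) where F_{≤m}(x) is the truncation of F to degree ≤ m. Then for all n and all k with 1 ≤ k ≤ n/2: [x^n](S_{≤n−k+1}(x) − S_{≤n−k}(x)) = ([x^{k−1}] Φ'(F(x))) · ([x^{n−k+1}] F(x)), where Φ'(x) = 1/(1−x)². -/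
open PowerSeries in
lemma coeff_inv_congr_aux (φ ψ : PowerSeries ℚ)
    (hφ : PowerSeries.constantCoeff φ ≠ 0)
    (hψ : PowerSeries.constantCoeff ψ ≠ 0) (d : ℕ)
    (h : ∀ i ≤ d, PowerSeries.coeff i φ = PowerSeries.coeff i ψ) :
    PowerSeries.coeff d φ⁻¹ = PowerSeries.coeff d ψ⁻¹ := by
  have h1 : φ * φ⁻¹ = 1 := PowerSeries.mul_inv_cancel _ hφ
  have h2 : ψ * ψ⁻¹ = 1 := PowerSeries.mul_inv_cancel _ hψ
  have key : φ⁻¹ - ψ⁻¹ = φ⁻¹ * ψ⁻¹ * (ψ - φ) := by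
    have : φ⁻¹ * ψ⁻¹ * (ψ - φ) = φ⁻¹ * (ψ * ψ⁻¹) - (φ * φ⁻¹) * ψ⁻¹ := by ring
    rw [this, h1, h2, mul_one, one_mul]
  have hdvd : (PowerSeries.X : PowerSeries ℚ) ^ (d + 1) ∣ (ψ - φ) := by
    rw [PowerSeries.X_pow_dvd_iff]
    intro m hm
    rw [map_sub, h m (by omega), sub_self]
  have hdvd2 : (PowerSeries.X : PowerSeries ℚ) ^ (d + 1) ∣ (φ⁻¹ - ψ⁻¹) := by
    rw [key]; exact Dvd.dvd.mul_left hdvd _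
  have := PowerSeries.X_pow_dvd_iff.1 hdvd2 d (by omega)
  rw [map_sub] at this
  linarith

open PowerSeries in
/-- Key coefficient identity: for `1 ≤ k ≤ n/2`,
`[x^n](S_{≤n−k+1} − S_{≤n−k}) = ([x^{k−1}]Φ'(F))·([x^{n−k+1}]F)`,
where `S_{≤m} = Φ(F_{≤m})`, `Φ(y) = 1/(1−y)`, `Φ'(y) = 1/(1−y)²`. -/
theorem truncated_structure_coefficient_identity (F : PowerSeries ℚ)
    (h0 : PowerSeries.constantCoeff F = 0)
    (hpos : ∀ i : ℕ, 0 ≤ PowerSeries.coeff i F)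
    (n k : ℕ) (hk : 1 ≤ k) (hkn : 2 * k ≤ n) :
    PowerSeries.coeff n
        ((1 - ((PowerSeries.trunc (n - k + 2) F : Polynomial ℚ) : PowerSeries ℚ))⁻¹
          - (1 - ((PowerSeries.trunc (n - k + 1) F : Polynomial ℚ) : PowerSeries ℚ))⁻¹)
      = PowerSeries.coeff (k - 1) (((1 - F)⁻¹) ^ 2) * PowerSeries.coeff (n - k + 1) F := by
  set m : ℕ := n - k + 1 with hm
  have hm2 : n - k + 2 = m + 1 := by omega
  set A : PowerSeries ℚ := ((PowerSeries.trunc (m + 1) F : Polynomial ℚ) : PowerSeries ℚ) with hA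
  set B : PowerSeries ℚ := ((PowerSeries.trunc m F : Polynomial ℚ) : PowerSeries ℚ) with hB
  -- coefficient facts
  have coeffA : ∀ i : ℕ, PowerSeries.coeff i A = if i < m + 1 then PowerSeries.coeff i F else 0 := by
    intro i
    rw [hA, Polynomial.coeff_coe, PowerSeries.coeff_trunc]
  have coeffB : ∀ i : ℕ, PowerSeries.coeff i B = if i < m then PowerSeries.coeff i F else 0 := by
    intro i
    rw [hB, Polynomial.coeff_coe, PowerSeries.coeff_trunc]
  have hA0 : PowerSeries.constantCoeff A = 0 := by
    have := coeffA 0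
    rw [PowerSeries.coeff_zero_eq_constantCoeff_apply] at this
    simpa [h0] using this
  have hB0 : PowerSeries.constantCoeff B = 0 := by
    have := coeffB 0
    rw [PowerSeries.coeff_zero_eq_constantCoeff_apply] at this
    have hm0 : 0 < m := by omega
    simpa [h0, hm0] using this
  have hcA : PowerSeries.constantCoeff (1 - A) ≠ 0 := by
    rw [map_sub, hA0]; simp
  have hcB : PowerSeries.constantCoeff (1 - B) ≠ 0 := by
    rw [map_sub, hB0]; simp
  have hcF : PowerSeries.constantCoeff (1 - F) ≠ 0 := by
    rw [map_sub, h0]; simp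
  have h1 : (1 - A) * (1 - A)⁻¹ = 1 := PowerSeries.mul_inv_cancel _ hcA
  have h2 : (1 - B) * (1 - B)⁻¹ = 1 := PowerSeries.mul_inv_cancel _ hcB
  -- main algebraic identity
  have key : (1 - A)⁻¹ - (1 - B)⁻¹ = (1 - A)⁻¹ * (1 - B)⁻¹ * (A - B) := by
    have : (1 - A)⁻¹ * (1 - B)⁻¹ * (A - B)
        = (1 - A)⁻¹ * ((1 - B) * (1 - B)⁻¹) - ((1 - A) * (1 - A)⁻¹) * (1 - B)⁻¹ := by ring
    rw [this, h1, h2, mul_one, one_mul]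
  -- A - B = monomial
  have hAB : A - B = (PowerSeries.C (PowerSeries.coeff m F)) * PowerSeries.X ^ m := by
    ext i
    rw [map_sub, coeffA, coeffB, PowerSeries.coeff_C_mul_X_pow]
    rcases lt_trichotomy i m with h | h | h
    · simp [h, Nat.lt_succ_of_lt h, h.ne]
    · subst h; simp
    · simp [Nat.not_lt.2 h.le, Nat.not_lt.2 (Nat.succ_le_of_lt h), h.ne']
  rw [key, hAB]
  have hn : n = (k - 1) + m := by omega
  rw [show (1 - A)⁻¹ * (1 - B)⁻¹ * (PowerSeries.C (PowerSeries.coeff m F) * PowerSeries.X ^ m)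
      = (PowerSeries.C (PowerSeries.coeff m F) * ((1 - A)⁻¹ * (1 - B)⁻¹)) * PowerSeries.X ^ m by ring,
    hn, PowerSeries.coeff_mul_X_pow, PowerSeries.coeff_C_mul, mul_comm]
  -- now show coeff (k-1) of (1-A)⁻¹ * (1-B)⁻¹ equals coeff (k-1) of (1-F)⁻¹ ^ 2
  have hAF : ∀ i ≤ k - 1, PowerSeries.coeff i (1 - A)⁻¹ = PowerSeries.coeff i (1 - F)⁻¹ := by
    intro i hi
    apply coeff_inv_congr_aux _ _ hcA hcF
    intro j hj
    rw [map_sub, map_sub, coeffA, if_pos (by omega)]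
  have hBF : ∀ i ≤ k - 1, PowerSeries.coeff i (1 - B)⁻¹ = PowerSeries.coeff i (1 - F)⁻¹ := by
    intro i hi
    apply coeff_inv_congr_aux _ _ hcB hcF
    intro j hj
    rw [map_sub, map_sub, coeffB, if_pos (by omega)]
  have hmain : PowerSeries.coeff (k - 1) ((1 - A)⁻¹ * (1 - B)⁻¹)
      = PowerSeries.coeff (k - 1) (((1 - F)⁻¹) ^ 2) := by
    rw [sq, PowerSeries.coeff_mul, PowerSeries.coeff_mul]
    apply Finset.sum_congr rfl
    intro p hp
    rw [Finset.HasAntidiagonal.mem_antidiagonal] at hp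
    rw [hAF p.1 (by omega), hBF p.2 (by omega)]
  rw [hmain]
end
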